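/- For any matroid M with a fixed linear order on its ground set, the number of bases of M containing no broken circuit equals (−1)^{r(M)} χ_M(0), where χ_M is the characteristic polynomial of M. -/

import Mathlib

open scoped Classical
open Polynomial Finset

variable {α : Type*}

/-- A circuit of a matroid: a minimal dependent (finite) set. -/
def IsCircuit (M : Matroid α) (C : Finset α) : Prop :=
  M.Dep (C : Set α) ∧ ∀ D : Finset α, D ⊂ C → M.Indep (D : Set α)

/-- A broken circuit with respect to a linear order: a circuit with its largest
element removed. -/
def IsBrokenCircuit [LinearOrder α] (M : Matroid α) (B : Finset α) : Prop :=
  ∃ C : Finset α, IsCircuit M C ∧ ∃ u ∈ C, (∀ v ∈ C, v ≤ u) ∧ B = C.erase u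

/-- `S` contains no broken circuit. -/
def NoBrokenCircuit [LinearOrder α] (M : Matroid α) (S : Finset α) : Prop :=
  ∀ B : Finset α, IsBrokenCircuit M B → ¬ B ⊆ S

/-- The rank of a finite set in a matroid: the maximal size of an independent subset. -/
noncomputable def mrank (M : Matroid α) (S : Finset α) : ℕ :=
  (S.powerset.filter fun T : Finset α => M.Indep (T : Set α)).sup Finset.card

/-- The characteristic polynomial of a (finite) matroid:
`χ_M(t) = Σ_{S ⊆ E} (−1)^{|S|} t^{r(M) − r(S)}`. -/
noncomputable def matCharPoly [Fintype α] (M : Matroid α) : Polynomial ℤ :=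
  ∑ S : Finset α, (-1 : ℤ[X]) ^ S.card * X ^ (mrank M univ - mrank M S)

section Aux

variable {M : Matroid α}

lemma aux_subset_ground (hE : M.E = Set.univ) (X : Set α) : X ⊆ M.E := by
  rw [hE]; exact Set.subset_univ _

lemma card_le_mrank {T S : Finset α} (hTS : T ⊆ S) (hT : M.Indep (T : Set α)) :
    T.card ≤ mrank M S :=
  Finset.le_sup (by simp [Finset.mem_filter, Finset.mem_powerset, hTS, hT])

lemma mrank_mono {S S' : Finset α} (h : S ⊆ S') : mrank M S ≤ mrank M S' :=
  Finset.sup_mono (Finset.filter_subset_filter _ (Finset.powerset_mono.2 h))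

lemma mrank_eq_of_basis {T S : Finset α} (hT : M.IsBasis (T : Set α) (S : Set α)) :
    mrank M S = T.card := by
  refine le_antisymm (Finset.sup_le ?_) (card_le_mrank (Finset.coe_subset.mp hT.subset) hT.indep)
  intro T' hT'
  simp only [Finset.mem_filter, Finset.mem_powerset] at hT'
  by_contra hlt
  push_neg at hlt
  obtain ⟨e, he, hins⟩ := hT.indep.augment hT'.2 (by
    rw [Set.encard_coe_eq_coe_finsetCard, Set.encard_coe_eq_coe_finsetCard]
    exact_mod_cast hlt)
  exact he.2 (hT.mem_of_insert_indep (Finset.coe_subset.mpr hT'.1 he.1) hins)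

lemma exists_finset_basis (hE : M.E = Set.univ) (S : Finset α) :
    ∃ T : Finset α, T ⊆ S ∧ M.IsBasis (T : Set α) (S : Set α) := by
  obtain ⟨I, hI⟩ := M.exists_isBasis (S : Set α) (aux_subset_ground hE _)
  have hfin : I.Finite := S.finite_toSet.subset hI.subset
  refine ⟨hfin.toFinset, ?_, ?_⟩
  · intro x hx
    have : x ∈ I := by simpa using hx
    exact_mod_cast hI.subset this
  · rwa [Set.Finite.coe_toFinset]

lemma base_card [Fintype α] (hE : M.E = Set.univ) {B : Finset α} (hB : M.IsBase (B : Set α)) :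
    B.card = mrank M Finset.univ := by
  have h : M.IsBasis (B : Set α) ((Finset.univ : Finset α) : Set α) := by
    rw [Finset.coe_univ, ← hE]; exact hB.isBasis_ground
  exact (mrank_eq_of_basis h).symm

lemma spanning_iff_mrank [Fintype α] (hE : M.E = Set.univ) (S : Finset α) :
    M.Spanning (S : Set α) ↔ mrank M S = mrank M Finset.univ := by
  obtain ⟨T, hTS, hT⟩ := exists_finset_basis hE S
  constructor
  · intro h
    have hTbase : M.IsBase (T : Set α) := by
      rw [Matroid.isBase_iff_indep_closure_eq]
      refine ⟨hT.indep, ?_⟩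
      rw [hT.closure_eq_closure]
      exact (M.spanning_iff_closure_eq (aux_subset_ground hE _)).1 h
    rw [mrank_eq_of_basis hT, base_card hE hTbase]
  · intro h
    have hcard : T.card = mrank M Finset.univ := by rw [← mrank_eq_of_basis hT, h]
    obtain ⟨B, hB, hTB⟩ := hT.indep.exists_isBase_superset
    have hBfin : B.Finite := Set.toFinite B
    have hB' : M.IsBase ((hBfin.toFinset : Finset α) : Set α) := by
      rwa [Set.Finite.coe_toFinset]
    have hcardB : hBfin.toFinset.card = mrank M Finset.univ := base_card hE hB'
    have hTB' : T ⊆ hBfin.toFinset := by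
      intro x hx
      simp only [Set.Finite.mem_toFinset]
      exact hTB (by exact_mod_cast hx)
    have : T = hBfin.toFinset :=
      Finset.eq_of_subset_of_card_le hTB' (by rw [hcardB, hcard])
    have hTbase : M.IsBase (T : Set α) := by rw [this]; exact hB'
    exact hTbase.spanning_of_superset hT.subset (aux_subset_ground hE _)

lemma exists_circuit_subset (hE : M.E = Set.univ) (S : Finset α) (hS : M.Dep (S : Set α)) :
    ∃ C, C ⊆ S ∧ IsCircuit M C := by
  induction S using Finset.strongInduction with
  | _ S ih =>
    by_cases h : ∀ D : Finset α, D ⊂ S → M.Indep (D : Set α)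
    · exact ⟨S, subset_rfl, hS, h⟩
    · push_neg at h
      obtain ⟨D, hDS, hD⟩ := h
      obtain ⟨C, hCD, hC⟩ := ih D hDS (Matroid.dep_of_not_indep hD (aux_subset_ground hE _))
      exact ⟨C, hCD.trans hDS.subset, hC⟩

lemma circuit_mem_closure_erase {C : Finset α} (hC : IsCircuit M C) {u : α} (hu : u ∈ C) :
    u ∈ M.closure ((C : Set α) \ {u}) := by
  rw [← Finset.coe_erase]
  have hind : M.Indep ((C.erase u : Finset α) : Set α) := hC.2 _ (Finset.erase_ssubset hu)
  have hdep : M.Dep (insert u ((C.erase u : Finset α) : Set α)) := by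
    rw [← Finset.coe_insert, Finset.insert_erase hu]; exact hC.1
  exact (hind.insert_dep_iff.mp hdep).1

/-- The "active" elements of `S`: those in the closure of the strictly smaller part of `S`. -/
noncomputable def actSet [Fintype α] [LinearOrder α] (M : Matroid α) (S : Finset α) : Finset α :=
  Finset.univ.filter fun e => e ∈ M.closure ((S.filter (· < e) : Finset α) : Set α)

variable [Fintype α] [LinearOrder α]

lemma mem_actSet_iff {S : Finset α} {e : α} :
    e ∈ actSet M S ↔ e ∈ M.closure ((S.filter (· < e) : Finset α) : Set α) := by
  simp [actSet]

lemma actSet_empty_of_nbc (hE : M.E = Set.univ) {S : Finset α}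
    (hS : M.IsBase (S : Set α)) (hnbc : NoBrokenCircuit M S) : actSet M S = ∅ := by
  rw [Finset.eq_empty_iff_forall_notMem]
  intro e he
  rw [mem_actSet_iff] at he
  set T := S.filter (· < e) with hTdef
  have hTS : T ⊆ S := Finset.filter_subset _ _
  have hTind : M.Indep (T : Set α) := hS.indep.subset (Finset.coe_subset.mpr hTS)
  have heT : e ∉ (T : Set α) := by simp [hTdef]
  have hdep : M.Dep (insert e (T : Set α)) := hTind.insert_dep_iff.mpr ⟨he, heT⟩
  rw [← Finset.coe_insert] at hdep
  by_cases heS : e ∈ S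
  · have hsub : insert e T ⊆ S := Finset.insert_subset heS hTS
    exact (hS.indep.subset (Finset.coe_subset.mpr hsub)).not_dep hdep
  · obtain ⟨C, hCsub, hC⟩ := exists_circuit_subset hE _ hdep
    have heC : e ∈ C := by
      by_contra h
      have hCT : C ⊆ T := fun x hx => (Finset.mem_insert.mp (hCsub hx)).resolve_left
        (fun hxe => h (hxe ▸ hx))
      exact (hTind.subset (Finset.coe_subset.mpr hCT)).not_dep hC.1
    have hmax : ∀ v ∈ C, v ≤ e := by
      intro v hv
      rcases Finset.mem_insert.mp (hCsub hv) with h | h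
      · exact h.le
      · exact (Finset.mem_filter.mp h).2.le
    refine hnbc (C.erase e) ⟨C, hC, e, heC, hmax, rfl⟩ ?_
    intro x hx
    rcases Finset.mem_insert.mp (hCsub (Finset.mem_of_mem_erase hx)) with h | h
    · exact absurd h (Finset.ne_of_mem_erase hx)
    · exact hTS h

lemma actSet_nonempty (hE : M.E = Set.univ) {S : Finset α} (hsp : M.Spanning (S : Set α))
    (h : ¬(M.IsBase (S : Set α) ∧ NoBrokenCircuit M S)) : (actSet M S).Nonempty := by
  obtain ⟨C, u, hC, huC, hmax, hsub⟩ :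
      ∃ C u, IsCircuit M C ∧ u ∈ C ∧ (∀ v ∈ C, v ≤ u) ∧ C.erase u ⊆ S := by
    by_cases hind : M.Indep (S : Set α)
    · have hbase := hsp.isBase_of_indep hind
      have hnbc : ¬ NoBrokenCircuit M S := fun hn => h ⟨hbase, hn⟩
      simp only [NoBrokenCircuit, not_forall, not_not] at hnbc
      obtain ⟨B, ⟨C, hC, u, huC, hmax, rfl⟩, hBS⟩ := hnbc
      exact ⟨C, u, hC, huC, hmax, hBS⟩
    · obtain ⟨C, hCS, hC⟩ := exists_circuit_subset hE S
        (Matroid.dep_of_not_indep hind (aux_subset_ground hE _))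
      have hne : C.Nonempty := by
        have := hC.1.nonempty
        rwa [Finset.coe_nonempty] at this
      exact ⟨C, C.max' hne, hC, C.max'_mem hne, fun v hv => C.le_max' v hv,
        fun x hx => hCS (Finset.mem_of_mem_erase hx)⟩
  refine ⟨u, ?_⟩
  rw [mem_actSet_iff]
  have h1 : u ∈ M.closure ((C : Set α) \ {u}) := circuit_mem_closure_erase hC huC
  refine M.closure_subset_closure ?_ h1
  intro x hx
  obtain ⟨hxC, hxu⟩ := hx
  rw [Finset.mem_coe] at hxC
  have hxu' : x ≠ u := hxu
  have hxCe : x ∈ C.erase u := Finset.mem_erase.mpr ⟨hxu', hxC⟩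
  simp only [Finset.coe_filter, Set.mem_setOf_eq]
  exact ⟨hsub hxCe, lt_of_le_of_ne (hmax x hxC) hxu'⟩

lemma spanning_erase (hE : M.E = Set.univ) {S : Finset α} {e : α} (hsp : M.Spanning (S : Set α))
    (he : e ∈ M.closure ((S.filter (· < e) : Finset α) : Set α)) :
    M.Spanning ((S.erase e : Finset α) : Set α) := by
  have hsub : ((S.filter (· < e) : Finset α) : Set α) ⊆ (S : Set α) \ {e} := by
    intro x hx
    simp only [Finset.coe_filter, Set.mem_setOf_eq] at hx
    exact ⟨hx.1, by simp [ne_of_lt hx.2]⟩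
  have he' : e ∈ M.closure ((S : Set α) \ {e}) := M.closure_subset_closure hsub he
  have hcl := Matroid.closure_diff_singleton_eq_closure he'
  rw [Matroid.spanning_iff_closure_eq (aux_subset_ground hE _)] at hsp ⊢
  rw [Finset.coe_erase, hcl, hsp]

lemma filter_lt_toggle {S : Finset α} {e c : α} (hce : c ≤ e) :
    ((if e ∈ S then S.erase e else insert e S).filter (· < c)) = S.filter (· < c) := by
  split
  · ext x
    simp only [Finset.mem_filter, Finset.mem_erase]
    constructor
    · rintro ⟨⟨_, hx⟩, hxc⟩; exact ⟨hx, hxc⟩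
    · rintro ⟨hx, hxc⟩; exact ⟨⟨ne_of_lt (lt_of_lt_of_le hxc hce), hx⟩, hxc⟩
  · ext x
    simp only [Finset.mem_filter, Finset.mem_insert]
    constructor
    · rintro ⟨hx | hx, hxc⟩
      · exact absurd hxc (by rw [hx]; exact not_lt.mpr hce)
      · exact ⟨hx, hxc⟩
    · rintro ⟨hx, hxc⟩; exact ⟨Or.inr hx, hxc⟩

lemma mem_actSet_toggle_iff {S : Finset α} {e c : α} (hce : c ≤ e) :
    c ∈ actSet M (if e ∈ S then S.erase e else insert e S) ↔ c ∈ actSet M S := by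
  rw [mem_actSet_iff, mem_actSet_iff, filter_lt_toggle hce]

end Aux

section Tog

variable [Fintype α] [LinearOrder α] {M : Matroid α}

/-- Toggle the minimal active element. -/
noncomputable def tog (M : Matroid α) [Fintype α] [LinearOrder α] (S : Finset α) : Finset α :=
  if h : (actSet M S).Nonempty then
    if (actSet M S).min' h ∈ S then S.erase ((actSet M S).min' h)
    else insert ((actSet M S).min' h) S
  else S

lemma actSet_toggle {S : Finset α} {e : α} (he : e ∈ actSet M S)
    (hmin : ∀ f ∈ actSet M S, e ≤ f) :
    e ∈ actSet M (if e ∈ S then S.erase e else insert e S) ∧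
      ∀ f ∈ actSet M (if e ∈ S then S.erase e else insert e S), e ≤ f := by
  refine ⟨(mem_actSet_toggle_iff le_rfl).mpr he, ?_⟩
  intro f hf
  by_contra hfe
  push_neg at hfe
  exact absurd (hmin f ((mem_actSet_toggle_iff hfe.le).mp hf)) (not_le.mpr hfe)

lemma tog_spec (hE : M.E = Set.univ) {S : Finset α} (hsp : M.Spanning (S : Set α))
    (hq : ¬(M.IsBase (S : Set α) ∧ NoBrokenCircuit M S)) :
    M.Spanning ((tog M S : Finset α) : Set α) ∧
    ¬(M.IsBase ((tog M S : Finset α) : Set α) ∧ NoBrokenCircuit M (tog M S)) ∧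
    tog M (tog M S) = S ∧ ((-1 : ℤ)) ^ (tog M S).card = -((-1 : ℤ)) ^ S.card ∧
    tog M S ≠ S := by
  have hne : (actSet M S).Nonempty := actSet_nonempty hE hsp hq
  set e := (actSet M S).min' hne with hedef
  have heact : e ∈ actSet M S := Finset.min'_mem _ _
  have hmin : ∀ f ∈ actSet M S, e ≤ f := fun f hf => Finset.min'_le _ _ hf
  have htog : tog M S = if e ∈ S then S.erase e else insert e S := by
    rw [tog, dif_pos hne]
  obtain ⟨hmem', hmin'⟩ := actSet_toggle heact hmin
  rw [← htog] at hmem' hmin'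
  have h' : (actSet M (tog M S)).Nonempty := ⟨e, hmem'⟩
  have hm' : (actSet M (tog M S)).min' h' = e :=
    le_antisymm (Finset.min'_le _ _ hmem') (Finset.le_min' _ _ _ hmin')
  have hsp' : M.Spanning ((tog M S : Finset α) : Set α) := by
    rw [htog]
    by_cases heS : e ∈ S
    · rw [if_pos heS]
      exact spanning_erase hE hsp (mem_actSet_iff.mp heact)
    · rw [if_neg heS]
      exact hsp.superset (by rw [Finset.coe_insert]; exact Set.subset_insert _ _)
        (aux_subset_ground hE _)
  have hq' : ¬(M.IsBase ((tog M S : Finset α) : Set α) ∧ NoBrokenCircuit M (tog M S)) := by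
    rintro ⟨hb, hn⟩
    have := actSet_empty_of_nbc hE hb hn
    rw [this] at h'
    exact Finset.not_nonempty_empty h'
  refine ⟨hsp', hq', ?_, ?_, ?_⟩
  · rw [tog, dif_pos h']
    have : (actSet M (tog M S)).min' h' = e := hm'
    rw [this, htog]
    by_cases heS : e ∈ S
    · rw [if_pos heS]
      rw [if_neg (Finset.notMem_erase e S), Finset.insert_erase heS]
    · rw [if_neg heS]
      rw [if_pos (Finset.mem_insert_self e S), Finset.erase_insert heS]
  · rw [htog]
    by_cases heS : e ∈ S
    · rw [if_pos heS, Finset.card_erase_of_mem heS]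
      have h1 : S.card - 1 + 1 = S.card :=
        Nat.succ_pred_eq_of_pos (Finset.card_pos.mpr ⟨e, heS⟩)
      rw [← h1, pow_succ]
      simp
    · rw [if_neg heS, Finset.card_insert_of_notMem heS]
      simp [pow_succ]
  · rw [htog]
    by_cases heS : e ∈ S
    · rw [if_pos heS]
      intro h
      exact (Finset.erase_eq_self.mp h) heS
    · rw [if_neg heS]
      intro h
      exact heS (Finset.insert_eq_self.mp h)

end Tog

/-- For a matroid `M` with a linearly ordered ground set, the number of bases
containing no broken circuit equals `(−1)^{r(M)} χ_M(0)`. -/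
theorem nbc_bases_eq_charPoly_at_zero [Fintype α] [LinearOrder α]
    (M : Matroid α) (hE : M.E = Set.univ) :
    ((univ.filter fun S : Finset α =>
        M.IsBase (S : Set α) ∧ NoBrokenCircuit M S).card : ℤ) =
      (-1 : ℤ) ^ (mrank M univ) * (matCharPoly M).eval 0 := by
  classical
  set r := mrank M (Finset.univ : Finset α) with hr
  have hcond : ∀ S : Finset α, (r - mrank M S = 0) ↔ M.Spanning (S : Set α) := by
    intro S
    rw [Nat.sub_eq_zero_iff_le, spanning_iff_mrank hE]
    constructor
    · intro h
      exact le_antisymm (mrank_mono (Finset.subset_univ S)) h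
    · intro h
      exact h.ge
  have heval : (matCharPoly M).eval 0 =
      ∑ S ∈ (Finset.univ : Finset (Finset α)).filter (fun S : Finset α => M.Spanning (S : Set α)),
        (-1 : ℤ) ^ S.card := by
    rw [matCharPoly, eval_finset_sum, Finset.sum_filter]
    refine Finset.sum_congr rfl fun S _ => ?_
    simp only [eval_mul, eval_pow, eval_neg, eval_one, eval_X]
    by_cases hc : M.Spanning (S : Set α)
    · rw [if_pos hc, ((hcond S).mpr hc : r - mrank M S = 0), pow_zero, mul_one]
    · rw [if_neg hc, zero_pow (fun h0 => hc ((hcond S).mp h0)), mul_zero]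
  have hzero : ∑ S ∈ (((Finset.univ : Finset (Finset α)).filter
        (fun S : Finset α => M.Spanning (S : Set α))).filter
        (fun S : Finset α => ¬(M.IsBase (S : Set α) ∧ NoBrokenCircuit M S))),
      (-1 : ℤ) ^ S.card = 0 := by
    have hmem : ∀ S : Finset α, S ∈ (((Finset.univ : Finset (Finset α)).filter
        (fun S : Finset α => M.Spanning (S : Set α))).filter
        (fun S : Finset α => ¬(M.IsBase (S : Set α) ∧ NoBrokenCircuit M S))) →
        M.Spanning (S : Set α) ∧ ¬(M.IsBase (S : Set α) ∧ NoBrokenCircuit M S) := by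
      intro S hS
      simp only [Finset.mem_filter, Finset.mem_univ, true_and] at hS
      exact hS
    refine Finset.sum_involution (fun S _ => tog M S) ?_ ?_ ?_ ?_
    · intro S hS
      obtain ⟨hsp, hq⟩ := hmem S hS
      have := (tog_spec hE hsp hq).2.2.2.1
      rw [this]; ring
    · intro S hS _
      obtain ⟨hsp, hq⟩ := hmem S hS
      exact (tog_spec hE hsp hq).2.2.2.2
    · intro S hS
      obtain ⟨hsp, hq⟩ := hmem S hS
      obtain ⟨h1, h2, _, _, _⟩ := tog_spec hE hsp hq
      simp only [Finset.mem_filter, Finset.mem_univ, true_and]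
      exact ⟨h1, h2⟩
    · intro S hS
      obtain ⟨hsp, hq⟩ := hmem S hS
      exact (tog_spec hE hsp hq).2.2.1
  have hsplit := Finset.sum_filter_add_sum_filter_not
    ((Finset.univ : Finset (Finset α)).filter (fun S : Finset α => M.Spanning (S : Set α)))
    (fun S : Finset α => M.IsBase (S : Set α) ∧ NoBrokenCircuit M S)
    (fun S : Finset α => (-1 : ℤ) ^ S.card)
  have hff : (((Finset.univ : Finset (Finset α)).filter
      (fun S : Finset α => M.Spanning (S : Set α))).filter
      (fun S : Finset α => M.IsBase (S : Set α) ∧ NoBrokenCircuit M S)) =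
      (Finset.univ : Finset (Finset α)).filter
      (fun S : Finset α => M.IsBase (S : Set α) ∧ NoBrokenCircuit M S) := by
    ext S
    simp only [Finset.mem_filter, Finset.mem_univ, true_and]
    constructor
    · rintro ⟨_, h⟩; exact h
    · intro h; exact ⟨h.1.spanning, h⟩
  have hfirst : ∑ S ∈ ((Finset.univ : Finset (Finset α)).filter
      (fun S : Finset α => M.IsBase (S : Set α) ∧ NoBrokenCircuit M S)), (-1 : ℤ) ^ S.card =
      ((Finset.univ : Finset (Finset α)).filter
      (fun S : Finset α => M.IsBase (S : Set α) ∧ NoBrokenCircuit M S)).card * (-1 : ℤ) ^ r := by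
    have hconst : ∀ S ∈ (Finset.univ : Finset (Finset α)).filter
        (fun S : Finset α => M.IsBase (S : Set α) ∧ NoBrokenCircuit M S),
        ((-1 : ℤ)) ^ S.card = ((-1 : ℤ)) ^ r := by
      intro S hS
      have hb : M.IsBase (S : Set α) := ((Finset.mem_filter.mp hS).2).1
      rw [base_card hE hb, hr]
    rw [Finset.sum_congr rfl hconst, Finset.sum_const, nsmul_eq_mul]
  have heval2 : (matCharPoly M).eval 0 = ((Finset.univ : Finset (Finset α)).filter
      (fun S : Finset α => M.IsBase (S : Set α) ∧ NoBrokenCircuit M S)).card * (-1 : ℤ) ^ r := by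
    rw [heval, ← hsplit, hff, hzero, add_zero, hfirst]
  have hone : (-1 : ℤ) ^ r * (-1 : ℤ) ^ r = 1 := by
    rw [← pow_add]
    exact Even.neg_one_pow ⟨r, rfl⟩
  obtain ⟨N, hN⟩ : ∃ N, ((Finset.univ : Finset (Finset α)).filter
      (fun S : Finset α => M.IsBase (S : Set α) ∧ NoBrokenCircuit M S)).card = N := ⟨_, rfl⟩
  rw [hN] at heval2
  rw [hN, heval2, mul_left_comm, hone, mul_one]
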